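/- arXiv:1012.2063 — 2 statements merged into one kernel-verified Lean document; each statement's English description precedes it below -/
import Mathlib

section
/- For every real x ≥ 0, 1 - Φ(x) > 2φ(x)/(√(4 + x²) + x); equivalently, 1 - Φ(x) > ((√(4 + x²) - x)/2)·φ(x) (Birnbaum's / Komatu's lower bound). -/
open MeasureTheory Real Filter Topology

/-- Standard Gaussian density. -/
noncomputable def gaussPdf (x : ℝ) : ℝ := Real.exp (-x ^ 2 / 2) / Real.sqrt (2 * Real.pi)

/-- Standard Gaussian distribution function. -/
noncomputable def gaussCdf (x : ℝ) : ℝ := ∫ t in Set.Iic x, gaussPdf t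

/-- Finite continued fraction `hcf k g x = x + 1/(x + 2/(⋯ + k/(g x)))`,
with `hcf 0 g = g`. -/
noncomputable def hcf : ℕ → (ℝ → ℝ) → ℝ → ℝ
  | 0, g => g
  | (k + 1), g => hcf k (fun x => x + ((k : ℝ) + 1) / g x)

lemma gaussPdf_pos (x : ℝ) : 0 < gaussPdf x :=
  div_pos (Real.exp_pos _) (Real.sqrt_pos.mpr (by positivity))

lemma gaussPdf_cont : Continuous gaussPdf :=
  (Real.continuous_exp.comp (by continuity)).div_const _

lemma gaussPdf_eq : gaussPdf = fun x => Real.exp (-(1/2) * x ^ 2) / Real.sqrt (2 * Real.pi) := by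
  funext x; unfold gaussPdf; ring_nf

lemma gaussPdf_integrable : Integrable gaussPdf := by
  rw [gaussPdf_eq]
  exact (integrable_exp_neg_mul_sq (by norm_num)).div_const _

lemma gaussPdf_integral : ∫ x, gaussPdf x = 1 := by
  rw [gaussPdf_eq]
  rw [integral_div, integral_gaussian]
  rw [show Real.pi / (1/2) = 2 * Real.pi by ring]
  exact div_self (by positivity)

lemma gaussCdf_eq (y : ℝ) : gaussCdf y = gaussCdf 0 + ∫ t in (0:ℝ)..y, gaussPdf t := by
  have h := intervalIntegral.integral_Iic_sub_Iic
    (gaussPdf_integrable.integrableOn (s := Set.Iic 0))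
    (gaussPdf_integrable.integrableOn (s := Set.Iic y))
  unfold gaussCdf
  linarith [h]

lemma gaussCdf_hasDerivAt (x : ℝ) : HasDerivAt gaussCdf (gaussPdf x) x := by
  have h1 : HasDerivAt (fun y => ∫ t in (0:ℝ)..y, gaussPdf t) (gaussPdf x) x :=
    intervalIntegral.integral_hasDerivAt_right gaussPdf_integrable.intervalIntegrable
      gaussPdf_cont.stronglyMeasurable.stronglyMeasurableAtFilter gaussPdf_cont.continuousAt
  have h2 := h1.const_add (gaussCdf 0)
  exact h2.congr_of_eventuallyEq (Filter.Eventually.of_forall fun y => gaussCdf_eq y)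

lemma gaussPdf_hasDerivAt (x : ℝ) : HasDerivAt gaussPdf (-x * gaussPdf x) x := by
  have h0 : HasDerivAt (fun y : ℝ => -y ^ 2 / 2) (-x) x := by
    have := ((hasDerivAt_pow 2 x).neg).div_const 2
    convert this using 1 <;> first | rfl | ring
  have := (h0.exp).div_const (Real.sqrt (2 * Real.pi))
  unfold gaussPdf
  convert this using 1
  all_goals first | rfl | ring

lemma sqrt_hasDerivAt (x : ℝ) :
    HasDerivAt (fun y => Real.sqrt (4 + y ^ 2)) (x / Real.sqrt (4 + x ^ 2)) x := by
  have h0 : HasDerivAt (fun y : ℝ => 4 + y ^ 2) (2 * x) x := by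
    simpa using (hasDerivAt_pow 2 x).const_add 4
  have := h0.sqrt (by positivity)
  convert this using 1
  rw [show 2 * Real.sqrt (4 + x ^ 2) = Real.sqrt (4 + x ^ 2) * 2 by ring,
    div_mul_eq_div_div]
  ring

noncomputable def Fb (y : ℝ) : ℝ :=
  1 - gaussCdf y - (Real.sqrt (4 + y ^ 2) - y) / 2 * gaussPdf y

lemma Fb_hasDerivAt (y : ℝ) :
    HasDerivAt Fb
      (-gaussPdf y - ((y / Real.sqrt (4 + y ^ 2) - 1) / 2 * gaussPdf y +
        (Real.sqrt (4 + y ^ 2) - y) / 2 * (-y * gaussPdf y))) y := by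
  have h1 := (hasDerivAt_const y (1:ℝ)).sub (gaussCdf_hasDerivAt y)
  have h2 := (((sqrt_hasDerivAt y).sub (hasDerivAt_id y)).div_const 2).mul
    (gaussPdf_hasDerivAt y)
  have := h1.sub h2
  convert this using 1
  all_goals first | rfl | (simp only [Pi.sub_apply, id_eq]; ring)

lemma Fb_deriv_neg (y : ℝ) (hy : 0 ≤ y) : deriv Fb y < 0 := by
  rw [(Fb_hasDerivAt y).deriv]
  set s := Real.sqrt (4 + y ^ 2) with hsdef
  have hs0 : 0 < s := Real.sqrt_pos.mpr (by positivity)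
  have hs2 : s ^ 2 = 4 + y ^ 2 := Real.sq_sqrt (by positivity)
  have hφ : 0 < gaussPdf y := gaussPdf_pos y
  have hb : -gaussPdf y - ((y / s - 1) / 2 * gaussPdf y + (s - y) / 2 * (-y * gaussPdf y))
      = gaussPdf y * ((3 * y + y ^ 3 - s * (1 + y ^ 2)) / (2 * s)) := by
    have hys : y / s = y * s / (4 + y ^ 2) := by
      rw [← hs2]
      field_simp
    rw [hys]
    have h4 : (0:ℝ) < 4 + y ^ 2 := by positivity
    field_simp
    linear_combination (y * (3 + y ^ 2)) * hs2
  rw [hb]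
  apply mul_neg_of_pos_of_neg hφ
  apply div_neg_of_neg_of_pos _ (by positivity)
  have hkey : (s * (1 + y ^ 2)) ^ 2 = (3 * y + y ^ 3) ^ 2 + 4 := by
    rw [mul_pow, hs2]; ring
  nlinarith [mul_pos hs0 (show (0:ℝ) < 1 + y ^ 2 by positivity), hkey,
    sq_nonneg (s * (1 + y ^ 2) + 3 * y + y ^ 3)]

lemma Fb_anti : StrictAntiOn Fb (Set.Ici 0) := by
  apply strictAntiOn_of_deriv_neg (convex_Ici 0)
  · exact (continuous_iff_continuousAt.mpr fun y => (Fb_hasDerivAt y).continuousAt).continuousOn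
  · intro y hy
    rw [interior_Ici] at hy
    exact Fb_deriv_neg y (le_of_lt hy)

lemma gaussCdf_tendsto : Tendsto (fun n : ℕ => gaussCdf n) atTop (𝓝 1) := by
  have hunion : (⋃ n : ℕ, Set.Iic (n : ℝ)) = Set.univ := by
    ext t
    simp only [Set.mem_iUnion, Set.mem_Iic, Set.mem_univ, iff_true]
    exact exists_nat_ge t
  have hmono : Monotone fun n : ℕ => Set.Iic (n : ℝ) := fun a b hab =>
    Set.Iic_subset_Iic.mpr (by exact_mod_cast hab)
  have := tendsto_setIntegral_of_monotone (fun n : ℕ => measurableSet_Iic) hmono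
    (by rw [hunion]; exact gaussPdf_integrable.integrableOn)
  rw [hunion] at this
  simpa [gaussCdf, setIntegral_univ, gaussPdf_integral] using this

lemma gaussPdf_tendsto : Tendsto (fun n : ℕ => gaussPdf n) atTop (𝓝 0) := by
  have h1 : Tendsto (fun y : ℝ => -y ^ 2 / 2) atTop atBot := by
    apply Filter.Tendsto.atBot_div_const (by norm_num)
    exact tendsto_neg_atTop_atBot.comp (tendsto_pow_atTop (by norm_num))
  have h2 : Tendsto (fun y : ℝ => gaussPdf y) atTop (𝓝 0) := by
    unfold gaussPdf
    simpa using (Real.tendsto_exp_atBot.comp h1).div_const (Real.sqrt (2 * Real.pi))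
  exact h2.comp tendsto_natCast_atTop_atTop

lemma Fb_tendsto : Tendsto (fun n : ℕ => Fb n) atTop (𝓝 0) := by
  have hterm : Tendsto (fun n : ℕ =>
      (Real.sqrt (4 + (n : ℝ) ^ 2) - n) / 2 * gaussPdf n) atTop (𝓝 0) := by
    apply squeeze_zero (fun n => ?_) (fun n => ?_) gaussPdf_tendsto
    · have hle : (n : ℝ) ≤ Real.sqrt (4 + (n : ℝ) ^ 2) := by
        nlinarith [Real.sq_sqrt (show (0:ℝ) ≤ 4 + (n:ℝ) ^ 2 by positivity),
          Real.sqrt_nonneg (4 + (n:ℝ) ^ 2), (by positivity : (0:ℝ) ≤ (n:ℝ))]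
      exact mul_nonneg (by linarith) (gaussPdf_pos n).le
    · have hle : Real.sqrt (4 + (n : ℝ) ^ 2) ≤ (n : ℝ) + 2 := by
        nlinarith [Real.sq_sqrt (show (0:ℝ) ≤ 4 + (n:ℝ) ^ 2 by positivity),
          Real.sqrt_nonneg (4 + (n:ℝ) ^ 2), (by positivity : (0:ℝ) ≤ (n:ℝ))]
      calc (Real.sqrt (4 + (n : ℝ) ^ 2) - n) / 2 * gaussPdf n
          ≤ 1 * gaussPdf n :=
            mul_le_mul_of_nonneg_right (by linarith) (gaussPdf_pos n).le
        _ = gaussPdf n := one_mul _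
  have := (tendsto_const_nhds (x := (1:ℝ)) (f := atTop)).sub gaussCdf_tendsto |>.sub hterm
  simpa [Fb] using this

/-- Birnbaum's / Komatu's lower bound. -/
theorem komatu_lower_bound (x : ℝ) (hx : 0 ≤ x) :
    1 - gaussCdf x > 2 * gaussPdf x / (Real.sqrt (4 + x ^ 2) + x) ∧
    1 - gaussCdf x > (Real.sqrt (4 + x ^ 2) - x) / 2 * gaussPdf x := by
  set s := Real.sqrt (4 + x ^ 2) with hsdef
  have hs0 : 0 < s := Real.sqrt_pos.mpr (by positivity)
  have hs2 : s ^ 2 = 4 + x ^ 2 := Real.sq_sqrt (by positivity)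
  have hmain : Fb x > 0 := by
    have h1 : Fb x > Fb (x + 1) := Fb_anti hx (Set.mem_Ici.mpr (by linarith)) (by linarith)
    have h2 : (0:ℝ) ≤ Fb (x + 1) := by
      apply le_of_tendsto Fb_tendsto
      filter_upwards [eventually_ge_atTop (⌈x + 1⌉₊)] with n hn
      have hn' : x + 1 ≤ (n : ℝ) := le_trans (Nat.le_ceil _) (by exact_mod_cast hn)
      rcases eq_or_lt_of_le hn' with h | h
      · rw [← h]
      · exact le_of_lt (Fb_anti (Set.mem_Ici.mpr (by linarith)) (Set.mem_Ici.mpr (by linarith)) h)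
    linarith
  have h2nd : 1 - gaussCdf x > (s - x) / 2 * gaussPdf x := by
    unfold Fb at hmain; linarith
  refine ⟨?_, h2nd⟩
  have heq : 2 * gaussPdf x / (s + x) = (s - x) / 2 * gaussPdf x := by
    rw [div_eq_iff (by positivity)]
    nlinarith [hs2, gaussPdf_pos x]
  rw [heq]; exact h2nd
end

section
/- For every integer k ≥ 0, the constant c_k* satisfies k + 1/2 < c_k* < k + 1. -/
open MeasureTheory Real

/-- The constants `c_k^*`: `c_0^* = 2/π` and `c_k^* = k² / c_{k-1}^*`. -/
noncomputable def cstar : ℕ → ℝ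
  | 0 => 2 / Real.pi
  | (k + 1) => ((k : ℝ) + 1) ^ 2 / cstar k

noncomputable def J (n : ℕ) : ℝ := ∫ x in (0:ℝ)..π, Real.sin x ^ n

lemma J_pos (n : ℕ) : 0 < J n := by unfold J; exact integral_sin_pow_pos n

lemma J_rec (n : ℕ) : J (n + 2) = ((n:ℝ) + 1) / ((n:ℝ) + 2) * J n := by
  unfold J
  rw [integral_sin_pow]
  simp

lemma J_zero : J 0 = π := by unfold J; simp

lemma J_one : J 1 = 2 := by unfold J; norm_num [integral_sin]

lemma J_succ_le (n : ℕ) : J (n + 1) ≤ J n := by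
  unfold J; exact integral_sin_pow_succ_le n

lemma J_mul (n : ℕ) : ((n:ℝ) + 1) * (J n * J (n + 1)) = 2 * π := by
  induction n with
  | zero => simp [J_zero, J_one]; ring
  | succ k ih =>
    have h2 : ((k:ℝ) + 2) ≠ 0 := by positivity
    rw [J_rec k]
    push_cast
    field_simp
    linear_combination ((k:ℝ) + 2) * ih

lemma cstar_eq (k : ℕ) : cstar k = 2 * π / J k ^ 2 := by
  induction k with
  | zero =>
    show 2 / π = 2 * π / J 0 ^ 2
    rw [J_zero]
    field_simp
  | succ k ih =>
    have hJk := (J_pos k).ne'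
    have hJk1 := (J_pos (k + 1)).ne'
    have hm := J_mul k
    show ((k : ℝ) + 1) ^ 2 / cstar k = 2 * π / J (k+1) ^ 2
    rw [ih]
    have hπ : (2 : ℝ) * π ≠ 0 := by positivity
    field_simp
    linear_combination (((k:ℝ)+1) * (J k * J (k+1)) + 2 * π) * hm

lemma v_step (k : ℕ) : (2*(k:ℝ)+1) * J k ^ 2 < (2*((k:ℝ)+2)+1) * J (k+2) ^ 2 := by
  have hsq : 0 < J k ^ 2 := pow_pos (J_pos k) 2
  have hE : (0:ℝ) < ((k:ℝ)+2)^2 := by positivity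
  rw [J_rec k, mul_pow, div_pow, div_mul_eq_mul_div, ← mul_div_assoc, lt_div_iff₀ hE]
  nlinarith [hsq]

lemma v_le (k : ℕ) : ((k:ℝ)+1)^2 * J k ^ 2 ≤ ((k:ℝ)+2) * (2*π) := by
  have h0 : J (k+2) ≤ J (k+1) := J_succ_le (k+1)
  have h1 : ((k:ℝ)+1) * J k ≤ ((k:ℝ)+2) * J (k+1) := by
    have := J_rec k
    have h2 : (0:ℝ) < (k:ℝ)+2 := by positivity
    rw [this] at h0
    rw [div_mul_eq_mul_div, div_le_iff₀ h2] at h0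
    linarith
  have hc : 0 ≤ ((k:ℝ)+1) * J k := mul_nonneg (by positivity) (J_pos k).le
  have h3 := mul_le_mul_of_nonneg_left h1 hc
  have hm := J_mul k
  nlinarith [h3, hm]

lemma v_le' (n : ℕ) : (2*(n:ℝ)+1) * J n ^ 2 ≤ 4*π + 2*π/((n:ℝ)+1) := by
  have hv := v_le n
  have h1 : (0:ℝ) < (n:ℝ)+1 := by positivity
  have hπ := pi_pos
  rw [← sub_nonneg]
  have key : 4*π + 2*π/((n:ℝ)+1) - (2*(n:ℝ)+1) * J n ^ 2 =
      ((4*π*((n:ℝ)+1)^2 + 2*π*((n:ℝ)+1)) - (2*(n:ℝ)+1)*(((n:ℝ)+1)^2 * J n^2)) / ((n:ℝ)+1)^2 := by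
    field_simp
  rw [key]
  apply div_nonneg _ (by positivity)
  nlinarith [hv, hπ]

lemma v_chain (k m : ℕ) : (2*(k:ℝ)+1) * J k ^ 2 ≤ (2*((k:ℝ)+2*m)+1) * J (k+2*m) ^ 2 := by
  induction m with
  | zero => simp
  | succ m ih =>
    have h := (v_step (k + 2*m)).le
    have he : k + 2*(m+1) = (k + 2*m) + 2 := by ring
    rw [he]
    push_cast at h ⊢
    calc (2*(k:ℝ)+1) * J k ^ 2 ≤ _ := ih
      _ ≤ _ := by convert h using 2 <;> push_cast <;> (try rfl) <;> ring

lemma v_le4 (k : ℕ) : (2*(k:ℝ)+1) * J k ^ 2 ≤ 4*π := by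
  have hall : ∀ m : ℕ, (2*(k:ℝ)+1) * J k ^ 2 ≤ 4*π + 2*π/((m:ℝ)+1) := by
    intro m
    have h1 := v_chain k m
    have h2 := v_le' (k + 2*m)
    push_cast at h2
    have h3 : 2*π/((k:ℝ)+2*m+1) ≤ 2*π/((m:ℝ)+1) := by
      apply div_le_div_of_nonneg_left (by positivity) (by positivity)
      push_cast
      have hk0 : (0:ℝ) ≤ (k:ℝ) := Nat.cast_nonneg k
      have hm0 : (0:ℝ) ≤ (m:ℝ) := Nat.cast_nonneg m
      linarith
    linarith
  by_contra hcon
  push_neg at hcon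
  set v := (2*(k:ℝ)+1) * J k ^ 2 with hv
  have hε : 0 < v - 4*π := by linarith
  obtain ⟨m, hm⟩ := exists_nat_gt (2*π/(v - 4*π))
  have h4 : 2*π/((m:ℝ)+1) < v - 4*π := by
    rw [div_lt_iff₀ (by positivity)]
    rw [div_lt_iff₀ hε] at hm
    nlinarith [hε, pi_pos]
  have := hall m
  linarith

lemma v_lt4 (k : ℕ) : (2*(k:ℝ)+1) * J k ^ 2 < 4*π := by
  have h1 := v_step k
  have h2 := v_le4 (k+2)
  push_cast at h2
  calc (2*(k:ℝ)+1) * J k ^ 2 < (2*((k:ℝ)+2)+1) * J (k+2) ^ 2 := h1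
    _ ≤ 4*π := by convert h2 using 2 <;> push_cast <;> ring

lemma cstar_lower (k : ℕ) : (k : ℝ) + 1 / 2 < cstar k := by
  rw [cstar_eq]
  rw [lt_div_iff₀ (pow_pos (J_pos k) 2)]
  have := v_lt4 k
  nlinarith [this]

/-- The constants `c_k^*` satisfy k + 1/2 < c_k^* < k + 1. -/
theorem cstar_basic_bounds (k : ℕ) :
    (k : ℝ) + 1 / 2 < cstar k ∧ cstar k < (k : ℝ) + 1 := by
  refine ⟨cstar_lower k, ?_⟩
  have h1 := cstar_lower (k+1)
  have h0 : (0:ℝ) < cstar k := lt_trans (by positivity) (cstar_lower k)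
  have hrec : cstar (k+1) = ((k : ℝ) + 1) ^ 2 / cstar k := rfl
  rw [hrec] at h1
  push_cast at h1
  rw [lt_div_iff₀ h0] at h1
  nlinarith [h1, h0]
end
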